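/- Let n ≥ 1, let A be a non-empty subset of ℝ^n, and let x ∈ ℝ^n. Then dist^c(x,A) = dist(0, V(x,A)), where dist(0,·) is the Euclidean distance from the origin to the set V(x,A). Furthermore, if A is convex, then dist^c(x,A) = dist(x,A), the Euclidean distance from x to A. -/

import Mathlib

open MeasureTheory

/-- The Euclidean norm on `Fin n → ℝ`. -/
noncomputable def euclNorm {n : ℕ} (x : Fin n → ℝ) : ℝ := Real.sqrt (∑ i, (x i) ^ 2)

/-- The modified convex distance:
`dist^c(x,A) = sup_{‖a‖₂ = 1} inf_{y ∈ A} ∑ i, a i * |x i - y i|`. -/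
noncomputable def distc {n : ℕ} (x : Fin n → ℝ) (A : Set (Fin n → ℝ)) : ℝ :=
  ⨆ a : {a : Fin n → ℝ // euclNorm a = 1}, ⨅ y : A, ∑ i, a.1 i * |x i - (y : Fin n → ℝ) i|

/-- `U(x,A)`: the set of vectors `(|x i - y i|)_i` for `y ∈ A`. -/
def Uset {n : ℕ} (x : Fin n → ℝ) (A : Set (Fin n → ℝ)) : Set (Fin n → ℝ) :=
  {u | ∃ y ∈ A, u = fun i => |x i - y i|}

/-- `V(x,A)`: the convex hull of `U(x,A)`. -/
noncomputable def Vset {n : ℕ} (x : Fin n → ℝ) (A : Set (Fin n → ℝ)) : Set (Fin n → ℝ) :=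
  convexHull ℝ (Uset x A)

open scoped RealInnerProductSpace

/-- Reinterpret a function as a point of Euclidean space (definitional identity). -/
def toE {n : ℕ} (x : Fin n → ℝ) : EuclideanSpace ℝ (Fin n) := WithLp.toLp 2 x

@[simp] lemma toE_apply {n : ℕ} (x : Fin n → ℝ) (i : Fin n) : toE x i = x i := rfl

lemma euclNorm_eq_norm {n : ℕ} (x : Fin n → ℝ) : euclNorm x = ‖toE x‖ := by
  rw [EuclideanSpace.norm_eq]
  simp [euclNorm, sq_abs]

lemma inner_euc {n : ℕ} (a b : Fin n → ℝ) : ⟪toE a, toE b⟫ = ∑ i, a i * b i := by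
  simp [PiLp.inner_apply, RCLike.inner_apply, conj_trivial]
  exact Finset.sum_congr rfl fun i _ => mul_comm _ _

lemma euclNorm_zero_sub' {n : ℕ} (v : Fin n → ℝ) :
    euclNorm ((0 : Fin n → ℝ) - v) = euclNorm v := by
  unfold euclNorm
  congr 1
  refine Finset.sum_congr rfl fun i _ => ?_
  simp

theorem part1 {n : ℕ} (hn : 1 ≤ n) (A : Set (Fin n → ℝ))
    (hA : A.Nonempty) (x : Fin n → ℝ) :
    distc x A = ⨅ v : Vset x A, euclNorm ((0 : Fin n → ℝ) - (v : Fin n → ℝ)) := by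
  classical
  obtain ⟨y₀, hy₀⟩ := hA
  haveI : Nonempty A := ⟨⟨y₀, hy₀⟩⟩
  have hUV : Uset x A ⊆ Vset x A := subset_convexHull ℝ _
  have hVne : (Vset x A).Nonempty := ⟨_, hUV ⟨y₀, hy₀, rfl⟩⟩
  haveI : Nonempty (Vset x A) := hVne.to_subtype
  set d : ℝ := ⨅ v : Vset x A, euclNorm ((0 : Fin n → ℝ) - (v : Fin n → ℝ)) with hd
  have hd0 : 0 ≤ d := le_ciInf fun v => Real.sqrt_nonneg _
  have hVconvE : Convex ℝ (WithLp.ofLp ⁻¹' Vset x A : Set (EuclideanSpace ℝ (Fin n))) :=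
    (convex_convexHull ℝ _).linear_preimage (WithLp.linearEquiv 2 ℝ (Fin n → ℝ)).toLinearMap
  -- upper bound
  have upper : ∀ a : {a : Fin n → ℝ // euclNorm a = 1},
      (⨅ y : A, ∑ i, a.1 i * |x i - (y : Fin n → ℝ) i|) ≤ d := by
    intro a
    by_cases hb : BddBelow (Set.range fun y : A => ∑ i, a.1 i * |x i - (y : Fin n → ℝ) i|)
    · set c : ℝ := ⨅ y : A, ∑ i, a.1 i * |x i - (y : Fin n → ℝ) i| with hc
      have haE1 : ‖toE a.1‖ = 1 := (euclNorm_eq_norm a.1).symm.trans a.2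
      have hlin : IsLinearMap ℝ (fun v : Fin n → ℝ => ⟪toE a.1, toE v⟫) :=
        ⟨fun u v => by simp only [inner_euc, Pi.add_apply, mul_add, Finset.sum_add_distrib],
         fun r v => by
          simp only [inner_euc, Pi.smul_apply, smul_eq_mul]
          rw [Finset.mul_sum]
          exact Finset.sum_congr rfl fun i _ => by ring⟩
      have hhalf : Vset x A ⊆ {v : Fin n → ℝ | c ≤ ⟪toE a.1, toE v⟫} := by
        rw [Vset]
        refine convexHull_min ?_ (convex_halfSpace_ge hlin c)
        rintro u ⟨y, hy, rfl⟩
        have h1 : c ≤ ∑ i, a.1 i * |x i - y i| := ciInf_le hb (⟨y, hy⟩ : A)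
        have h2 : ⟪toE a.1,
            toE (fun i => |x i - y i|)⟫
            = ∑ i, a.1 i * |x i - y i| := inner_euc _ _
        simpa [Set.mem_setOf_eq, h2] using h1
      refine le_ciInf fun v => ?_
      have hv : c ≤ ⟪toE a.1, toE (v : Fin n → ℝ)⟫ :=
        hhalf v.2
      have hcs : ⟪toE a.1, toE (v : Fin n → ℝ)⟫
          ≤ ‖toE a.1‖ * ‖toE (v : Fin n → ℝ)‖ :=
        real_inner_le_norm _ _
      rw [euclNorm_zero_sub' v.1, euclNorm_eq_norm v.1]
      calc c ≤ ‖toE a.1‖ * ‖toE (v : Fin n → ℝ)‖ :=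
            hv.trans hcs
        _ = ‖toE (v : Fin n → ℝ)‖ := by rw [haE1, one_mul]
    · rw [Real.iInf_of_not_bddBelow hb]
      exact hd0
  -- a canonical unit vector
  set e : Fin n → ℝ := fun i => if i = (⟨0, hn⟩ : Fin n) then 1 else 0 with he
  have heNorm : euclNorm e = 1 := by
    unfold euclNorm
    have h : ∀ i, (e i) ^ 2 = if i = (⟨0, hn⟩ : Fin n) then (1:ℝ) else 0 := by
      intro i; simp only [he]; split <;> norm_num
    rw [Finset.sum_congr rfl fun i _ => h i]
    simp
  haveI : Nonempty {a : Fin n → ℝ // euclNorm a = 1} := ⟨⟨e, heNorm⟩⟩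
  -- lower bound
  have lower : ∃ a : {a : Fin n → ℝ // euclNorm a = 1},
      d ≤ ⨅ y : A, ∑ i, a.1 i * |x i - (y : Fin n → ℝ) i| := by
    rcases eq_or_lt_of_le hd0 with hdz | hdpos
    · refine ⟨⟨e, heNorm⟩, ?_⟩
      rw [← hdz]
      refine le_ciInf fun y => ?_
      show (0:ℝ) ≤ ∑ i, e i * |x i - (y : Fin n → ℝ) i|
      have h : ∑ i, e i * |x i - (y : Fin n → ℝ) i|
          = |x ⟨0, hn⟩ - (y : Fin n → ℝ) ⟨0, hn⟩| := by
        simp [he]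
      rw [h]
      positivity
    · -- d > 0 : use projection onto the closure of V
      set K : Set (EuclideanSpace ℝ (Fin n)) := closure (WithLp.ofLp ⁻¹' Vset x A) with hK
      have hKne : K.Nonempty := ⟨toE _, subset_closure (hUV ⟨y₀, hy₀, rfl⟩)⟩
      have hKconv : Convex ℝ K := hVconvE.closure
      obtain ⟨p, hpK, hp⟩ :=
        isClosed_closure.exists_infDist_eq_dist hKne (0 : EuclideanSpace ℝ (Fin n))
      have hinfV : Metric.infDist (0 : EuclideanSpace ℝ (Fin n)) (WithLp.ofLp ⁻¹' Vset x A)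
          = d := by
        rw [Metric.infDist_eq_iInf, hd]
        refine Equiv.iInf_congr (Equiv.subtypeEquiv (WithLp.equiv 2 (Fin n → ℝ))
          (fun _ => Iff.rfl)) fun v => ?_
        rw [euclNorm_zero_sub', euclNorm_eq_norm, dist_zero_left]
        rfl
      have hinfK : Metric.infDist (0 : EuclideanSpace ℝ (Fin n)) K = d := by
        rw [hK, Metric.infDist_closure, hinfV]
      have hpnorm : ‖p‖ = d := by
        rw [← dist_zero_left, ← hp, hinfK]
      have hproj : ‖(0 : EuclideanSpace ℝ (Fin n)) - p‖
          = ⨅ w : K, ‖(0 : EuclideanSpace ℝ (Fin n)) - w‖ := by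
        have h1 : (⨅ w : K, ‖(0 : EuclideanSpace ℝ (Fin n)) - w‖)
            = Metric.infDist (0 : EuclideanSpace ℝ (Fin n)) K := by
          rw [Metric.infDist_eq_iInf]
          exact (iInf_congr fun w => by rw [dist_eq_norm]).symm
        rw [h1, hinfK, zero_sub, norm_neg]
        exact hpnorm
      have hchar := (norm_eq_iInf_iff_real_inner_le_zero hKconv hpK).mp hproj
      have hkey : ∀ w ∈ K, ‖p‖ ^ 2 ≤ ⟪p, w⟫ := by
        intro w hw
        have h1 := hchar w hw
        rw [zero_sub, inner_neg_left, inner_sub_right, real_inner_self_eq_norm_sq] at h1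
        linarith
      have hpne : ‖p‖ ≠ 0 := by rw [hpnorm]; exact ne_of_gt hdpos
      have hppos : (0:ℝ) < ‖p‖ := by rw [hpnorm]; exact hdpos
      have haE1 : euclNorm (‖p‖⁻¹ • p : EuclideanSpace ℝ (Fin n)) = 1 := by
        have h0 : toE (fun i => (‖p‖⁻¹ • p : EuclideanSpace ℝ (Fin n)) i)
            = (‖p‖⁻¹ • p : EuclideanSpace ℝ (Fin n)) := rfl
        rw [show euclNorm (‖p‖⁻¹ • p : EuclideanSpace ℝ (Fin n))
            = ‖(‖p‖⁻¹ • p : EuclideanSpace ℝ (Fin n))‖ from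
          (euclNorm_eq_norm _).trans (by rw [h0])]
        rw [norm_smul, norm_inv, norm_norm, inv_mul_cancel₀ hpne]
      refine ⟨⟨‖p‖⁻¹ • p, haE1⟩, ?_⟩
      refine le_ciInf fun y => ?_
      show d ≤ ∑ i, (‖p‖⁻¹ • p : EuclideanSpace ℝ (Fin n)) i * |x i - (y : Fin n → ℝ) i|
      have huK : toE (fun i => |x i - (y : Fin n → ℝ) i|) ∈ K :=
        subset_closure (hUV ⟨y, y.2, rfl⟩)
      have h2 : ‖p‖ ^ 2 ≤ ⟪p, toE (fun i => |x i - (y : Fin n → ℝ) i|)⟫ :=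
        hkey _ huK
      have h3 : (∑ i, (‖p‖⁻¹ • p : EuclideanSpace ℝ (Fin n)) i * |x i - (y : Fin n → ℝ) i|)
          = ⟪(‖p‖⁻¹ • p : EuclideanSpace ℝ (Fin n)),
              toE (fun i => |x i - (y : Fin n → ℝ) i|)⟫ :=
        (inner_euc _ _).symm
      rw [h3, real_inner_smul_left, ← hpnorm]
      have h4 : ‖p‖⁻¹ * ‖p‖ ^ 2 ≤ ‖p‖⁻¹ * ⟪p, toE (fun i => |x i - (y : Fin n → ℝ) i|)⟫ :=
        mul_le_mul_of_nonneg_left h2 (inv_nonneg.mpr hppos.le)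
      calc ‖p‖ = ‖p‖⁻¹ * ‖p‖ ^ 2 := by field_simp
        _ ≤ _ := h4
  -- conclude
  have bdd : BddAbove (Set.range fun a : {a : Fin n → ℝ // euclNorm a = 1} =>
      ⨅ y : A, ∑ i, a.1 i * |x i - (y : Fin n → ℝ) i|) := by
    refine ⟨d, ?_⟩
    rintro _ ⟨a, rfl⟩
    exact upper a
  refine le_antisymm (ciSup_le upper) ?_
  obtain ⟨a, ha⟩ := lower
  exact ha.trans (le_ciSup bdd a)

theorem part2 {n : ℕ} (A : Set (Fin n → ℝ)) (hA : A.Nonempty) (x : Fin n → ℝ)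
    (hconv : Convex ℝ A) :
    (⨅ v : Vset x A, euclNorm ((0 : Fin n → ℝ) - (v : Fin n → ℝ)))
      = ⨅ y : A, euclNorm (x - (y : Fin n → ℝ)) := by
  classical
  obtain ⟨y₀, hy₀⟩ := hA
  haveI : Nonempty A := ⟨⟨y₀, hy₀⟩⟩
  have hUV : Uset x A ⊆ Vset x A := subset_convexHull ℝ _
  have hVne : (Vset x A).Nonempty := ⟨_, hUV ⟨y₀, hy₀, rfl⟩⟩
  haveI : Nonempty (Vset x A) := hVne.to_subtype
  have hbddV : BddBelow (Set.range fun v : Vset x A =>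
      euclNorm ((0 : Fin n → ℝ) - (v : Fin n → ℝ))) := by
    refine ⟨0, ?_⟩; rintro _ ⟨v, rfl⟩; exact Real.sqrt_nonneg _
  have hbddA : BddBelow (Set.range fun y : A => euclNorm (x - (y : Fin n → ℝ))) := by
    refine ⟨0, ?_⟩; rintro _ ⟨y, rfl⟩; exact Real.sqrt_nonneg _
  refine le_antisymm ?_ ?_
  · refine le_ciInf fun y => ?_
    have hmem : (fun i => |x i - (y : Fin n → ℝ) i|) ∈ Vset x A := hUV ⟨y, y.2, rfl⟩
    have h1 := ciInf_le hbddV (⟨_, hmem⟩ : Vset x A)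
    refine h1.trans (le_of_eq ?_)
    unfold euclNorm
    congr 1
    refine Finset.sum_congr rfl fun i _ => ?_
    simp [sq_abs]
  · refine le_ciInf fun v => ?_
    set S : Set (Fin n → ℝ) := {w | ∃ y ∈ A, ∀ i, |x i - y i| ≤ w i} with hS
    have hSconv : Convex ℝ S := by
      rintro w₁ ⟨y₁, hy₁, h₁⟩ w₂ ⟨y₂, hy₂, h₂⟩ s t hs ht hst
      refine ⟨s • y₁ + t • y₂, hconv hy₁ hy₂ hs ht hst, fun i => ?_⟩
      have hxi : x i - (s • y₁ + t • y₂) i = s * (x i - y₁ i) + t * (x i - y₂ i) := by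
        simp only [Pi.add_apply, Pi.smul_apply, smul_eq_mul]
        linear_combination (x i) * hst.symm
      rw [hxi]
      calc |s * (x i - y₁ i) + t * (x i - y₂ i)|
          ≤ |s * (x i - y₁ i)| + |t * (x i - y₂ i)| := abs_add_le _ _
        _ = s * |x i - y₁ i| + t * |x i - y₂ i| := by
            rw [abs_mul, abs_mul, abs_of_nonneg hs, abs_of_nonneg ht]
        _ ≤ s * w₁ i + t * w₂ i := by
            gcongr
            exacts [h₁ i, h₂ i]
        _ = (s • w₁ + t • w₂) i := by simp [smul_eq_mul]
    have hVS : Vset x A ⊆ S := by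
      rw [Vset]
      refine convexHull_min ?_ hSconv
      rintro u ⟨y, hy, rfl⟩
      exact ⟨y, hy, fun i => le_refl _⟩
    obtain ⟨y, hy, hle⟩ := hVS v.2
    have h2 : euclNorm (x - y) ≤ euclNorm ((0 : Fin n → ℝ) - (v : Fin n → ℝ)) := by
      unfold euclNorm
      apply Real.sqrt_le_sqrt
      refine Finset.sum_le_sum fun i _ => ?_
      have h3 : |x i - y i| ≤ (v : Fin n → ℝ) i := hle i
      simp only [Pi.sub_apply, Pi.zero_apply, zero_sub, neg_sq]
      calc (x i - y i) ^ 2 = |x i - y i| ^ 2 := (sq_abs _).symm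
        _ ≤ ((v : Fin n → ℝ) i) ^ 2 := by
            apply pow_le_pow_left₀ (abs_nonneg _) h3
    exact (ciInf_le hbddA (⟨y, hy⟩ : A)).trans h2

theorem distc_eq_dist_convexHull {n : ℕ} (hn : 1 ≤ n) (A : Set (Fin n → ℝ))
    (hA : A.Nonempty) (x : Fin n → ℝ) :
    -- dist^c(x,A) is the Euclidean distance from the origin to V(x,A)
    distc x A = ⨅ v : Vset x A, euclNorm ((0 : Fin n → ℝ) - (v : Fin n → ℝ)) ∧
    -- and if A is convex it is the Euclidean distance from x to A
    (Convex ℝ A → distc x A = ⨅ y : A, euclNorm (x - (y : Fin n → ℝ))) := by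
  refine ⟨part1 hn A hA x, fun hconv => ?_⟩
  rw [part1 hn A hA x, part2 A hA x hconv]
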